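/- Let h>0, α∈(0,1] and let u: ℕ→ℝ be any sequence. Then for every n∈ℕ, the fractional h-sum of order α of the Caputo h-difference of order α of u satisfies (S_α(C_α u))(n) = u(n+1) − u(0). (This is Proposition 8 of the paper: (_0Δ_h^{−α}(_aΔ^α_{h,*}x))(nh+a) = x(nh+a) − x(a) for n≥1, with a=(α−1)h.) -/

import Mathlib

/-- `c γ m = Γ(γ+m)/(Γ(γ)·Γ(m+1))`. -/
noncomputable def cCoeff (γ : ℝ) (m : ℕ) : ℝ :=
  Real.Gamma (γ + m) / (Real.Gamma γ * Real.Gamma (m + 1))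

/-- Fractional `h`-sum of order `γ`: `(S_γ u)(n) = h^γ·∑_{k=0}^{n} c_γ(n−k)·u(k)`. -/
noncomputable def fracSum (h γ : ℝ) (u : ℕ → ℝ) (n : ℕ) : ℝ :=
  h ^ γ * ∑ k ∈ Finset.range (n + 1), cCoeff γ (n - k) * u k

/-- Caputo `h`-difference of order `α ∈ (0,1]`. -/
noncomputable def caputo (h α : ℝ) (u : ℕ → ℝ) (n : ℕ) : ℝ :=
  if α < 1 then
    h ^ (1 - α) * ∑ k ∈ Finset.range (n + 1), cCoeff (1 - α) (n - k) * ((u (k + 1) - u k) / h)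
  else (u (n + 1) - u n) / h

lemma cCoeff_zero {γ : ℝ} (hγ : 0 < γ) : cCoeff γ 0 = 1 := by
  have : Real.Gamma γ ≠ 0 := (Real.Gamma_pos_of_pos hγ).ne'
  simp [cCoeff, Real.Gamma_one, this]

lemma cCoeff_one (m : ℕ) : cCoeff 1 m = 1 := by
  have h1 : (1 : ℝ) + m = (m : ℝ) + 1 := by ring
  have h2 : Real.Gamma ((m : ℝ) + 1) ≠ 0 :=
    (Real.Gamma_pos_of_pos (by positivity)).ne'
  simp [cCoeff, h1, Real.Gamma_one, h2]

lemma cCoeff_succ {γ : ℝ} (hγ : 0 < γ) (m : ℕ) :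
    ((m : ℝ) + 1) * cCoeff γ (m + 1) = (γ + m) * cCoeff γ m := by
  have hγm : γ + (m : ℝ) ≠ 0 := by positivity
  have hm1 : ((m : ℝ) + 1) ≠ 0 := by positivity
  have e1 : γ + ((m + 1 : ℕ) : ℝ) = (γ + m) + 1 := by push_cast; ring
  have e2 : (((m + 1 : ℕ) : ℝ)) + 1 = ((m : ℝ) + 1) + 1 := by push_cast; ring
  have hΓγ : Real.Gamma γ ≠ 0 := (Real.Gamma_pos_of_pos hγ).ne'
  have hΓm : Real.Gamma ((m : ℝ) + 1) ≠ 0 :=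
    (Real.Gamma_pos_of_pos (by positivity)).ne'
  unfold cCoeff
  rw [e1, e2, Real.Gamma_add_one hγm, Real.Gamma_add_one hm1]
  field_simp

/-- Chu–Vandermonde convolution for the coefficients. -/
lemma cCoeff_conv {γ δ : ℝ} (hγ : 0 < γ) (hδ : 0 < δ) (m : ℕ) :
    ∑ i ∈ Finset.range (m + 1), cCoeff γ (m - i) * cCoeff δ i = cCoeff (γ + δ) m := by
  induction m with
  | zero => simp [cCoeff_zero hγ, cCoeff_zero hδ, cCoeff_zero (by linarith : (0:ℝ) < γ + δ)]
  | succ m ih =>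
    have hm1 : ((m : ℝ) + 1) ≠ 0 := by positivity
    have key : ((m : ℝ) + 1) * ∑ i ∈ Finset.range (m + 2), cCoeff γ (m + 1 - i) * cCoeff δ i
        = (γ + δ + m) * ∑ i ∈ Finset.range (m + 1), cCoeff γ (m - i) * cCoeff δ i := by
      have split : ((m : ℝ) + 1) * ∑ i ∈ Finset.range (m + 2), cCoeff γ (m + 1 - i) * cCoeff δ i
          = (∑ i ∈ Finset.range (m + 2), ((m + 1 - i : ℕ) : ℝ) * cCoeff γ (m + 1 - i) * cCoeff δ i)
            + ∑ i ∈ Finset.range (m + 2), (i : ℝ) * (cCoeff γ (m + 1 - i) * cCoeff δ i) := by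
        rw [Finset.mul_sum, ← Finset.sum_add_distrib]
        refine Finset.sum_congr rfl fun i hi => ?_
        have hi' : i ≤ m + 1 := Nat.lt_succ_iff.mp (Finset.mem_range.mp hi)
        have : ((m + 1 - i : ℕ) : ℝ) + (i : ℝ) = (m : ℝ) + 1 := by
          have := Nat.sub_add_cancel hi'
          push_cast [Nat.cast_sub hi']
          ring
        rw [← this]; ring
      have hA : (∑ i ∈ Finset.range (m + 2), ((m + 1 - i : ℕ) : ℝ) * cCoeff γ (m + 1 - i) * cCoeff δ i)
          = ∑ i ∈ Finset.range (m + 1), (γ + ((m - i : ℕ) : ℝ)) * cCoeff γ (m - i) * cCoeff δ i := by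
        rw [Finset.sum_range_succ]
        simp only [Nat.sub_self, Nat.cast_zero, zero_mul]
        rw [add_zero]
        refine Finset.sum_congr rfl fun i hi => ?_
        have hi' : i ≤ m := Nat.lt_succ_iff.mp (Finset.mem_range.mp hi)
        have e : m + 1 - i = (m - i) + 1 := by omega
        rw [e]
        have hs := cCoeff_succ hγ (m - i)
        push_cast at hs ⊢
        calc (((m - i : ℕ) : ℝ) + 1) * cCoeff γ (m - i + 1) * cCoeff δ i
            = ((((m - i : ℕ) : ℝ) + 1) * cCoeff γ (m - i + 1)) * cCoeff δ i := by ring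
          _ = ((γ + ((m - i : ℕ) : ℝ)) * cCoeff γ (m - i)) * cCoeff δ i := by rw [hs]
          _ = (γ + ((m - i : ℕ) : ℝ)) * cCoeff γ (m - i) * cCoeff δ i := by ring
      have hB : (∑ i ∈ Finset.range (m + 2), (i : ℝ) * (cCoeff γ (m + 1 - i) * cCoeff δ i))
          = ∑ i ∈ Finset.range (m + 1), (δ + (i : ℝ)) * cCoeff δ i * cCoeff γ (m - i) := by
        rw [Finset.sum_range_succ']
        simp only [Nat.cast_zero, zero_mul, add_zero]
        refine Finset.sum_congr rfl fun i hi => ?_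
        have e : m + 1 - (i + 1) = m - i := by omega
        rw [e]
        have := cCoeff_succ hδ i
        push_cast at this ⊢
        calc ((i : ℝ) + 1) * (cCoeff γ (m - i) * cCoeff δ (i + 1))
            = (((i : ℝ) + 1) * cCoeff δ (i + 1)) * cCoeff γ (m - i) := by ring
          _ = ((δ + i) * cCoeff δ i) * cCoeff γ (m - i) := by rw [this]
          _ = (δ + i) * cCoeff δ i * cCoeff γ (m - i) := by ring
      rw [split, hA, hB, Finset.mul_sum, ← Finset.sum_add_distrib]
      refine Finset.sum_congr rfl fun i hi => ?_
      have hi' : i ≤ m := Nat.lt_succ_iff.mp (Finset.mem_range.mp hi)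
      have : ((m - i : ℕ) : ℝ) = (m : ℝ) - i := by
        push_cast [Nat.cast_sub hi']; ring
      rw [this]; ring
    have hc := cCoeff_succ (by linarith : (0:ℝ) < γ + δ) m
    rw [ih] at key
    rw [← hc] at key
    exact mul_left_cancel₀ hm1 key

theorem fracSum_caputo (h α : ℝ) (hh : 0 < h) (hα1 : 0 < α) (hα2 : α ≤ 1)
    (u : ℕ → ℝ) (n : ℕ) :
    fracSum h α (caputo h α u) n = u (n + 1) - u 0 := by
  have hne : h ≠ 0 := hh.ne'
  rcases lt_or_eq_of_le hα2 with hlt | heq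
  · -- α < 1
    have hδ : 0 < 1 - α := by linarith
    have hpow : h ^ α * h ^ (1 - α) = h := by
      rw [← Real.rpow_add hh]; norm_num
    simp only [fracSum, caputo, if_pos hlt]
    -- push everything into a double sum
    have scal : ∀ A B C : ℝ,
        h ^ α * (A * (h ^ (1 - α) * (B * (C / h)))) = A * (B * C) := by
      intro A B C
      field_simp
      calc h ^ α * A * h ^ (1-α) * B * C = (h ^ α * h ^ (1-α)) * (A * (B * C)) := by ring
        _ = h * (A * (B * C)) := by rw [hpow]
        _ = A * B * C * h := by ring
    calc h ^ α * ∑ k ∈ Finset.range (n + 1), cCoeff α (n - k) *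
          (h ^ (1 - α) * ∑ j ∈ Finset.range (k + 1),
            cCoeff (1 - α) (k - j) * ((u (j + 1) - u j) / h))
        = ∑ k ∈ Finset.range (n + 1), ∑ j ∈ Finset.range (k + 1),
            cCoeff α (n - k) * (cCoeff (1 - α) (k - j) * (u (j + 1) - u j)) := by
          rw [Finset.mul_sum]
          refine Finset.sum_congr rfl fun k hk => ?_
          rw [Finset.mul_sum, Finset.mul_sum, Finset.mul_sum]
          exact Finset.sum_congr rfl fun j hj => scal _ _ _
      _ = ∑ j ∈ Finset.range (n + 1), ∑ k ∈ Finset.Icc j n,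
            cCoeff α (n - k) * (cCoeff (1 - α) (k - j) * (u (j + 1) - u j)) := by
          refine Finset.sum_comm' fun k j => ?_
          simp only [Finset.mem_range, Finset.mem_Icc]
          omega
      _ = ∑ j ∈ Finset.range (n + 1), (u (j + 1) - u j) := by
          refine Finset.sum_congr rfl fun j hj => ?_
          have hjn : j ≤ n := Nat.lt_succ_iff.mp (Finset.mem_range.mp hj)
          have inner : ∑ k ∈ Finset.Icc j n, cCoeff α (n - k) * cCoeff (1 - α) (k - j) = 1 := by
            rw [show Finset.Icc j n = Finset.Ico j (n + 1) by rw [Finset.Ico_add_one_right_eq_Icc],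
              Finset.sum_Ico_eq_sum_range]
            have hrange : n + 1 - j = (n - j) + 1 := by omega
            rw [hrange]
            have : ∀ i ∈ Finset.range ((n - j) + 1),
                cCoeff α (n - (j + i)) * cCoeff (1 - α) ((j + i) - j)
                  = cCoeff α ((n - j) - i) * cCoeff (1 - α) i := by
              intro i hi
              congr 2 <;> omega
            rw [Finset.sum_congr rfl this, cCoeff_conv hα1 hδ]
            rw [show α + (1 - α) = 1 by ring, cCoeff_one]
          calc ∑ k ∈ Finset.Icc j n,
                cCoeff α (n - k) * (cCoeff (1 - α) (k - j) * (u (j + 1) - u j))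
              = (∑ k ∈ Finset.Icc j n, cCoeff α (n - k) * cCoeff (1 - α) (k - j))
                  * (u (j + 1) - u j) := by
                rw [Finset.sum_mul]; exact Finset.sum_congr rfl fun k _ => by ring
            _ = u (j + 1) - u j := by rw [inner, one_mul]
      _ = u (n + 1) - u 0 := Finset.sum_range_sub u (n + 1)
  · -- α = 1
    subst heq
    simp only [fracSum, caputo, lt_irrefl, if_false]
    simp only [cCoeff_one, one_mul]
    rw [← Finset.sum_div, Real.rpow_one, mul_div_cancel₀ _ hne]
    exact Finset.sum_range_sub u (n + 1)
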